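/- Let A ⊆ A' be regular (closed densely defined) operators on a complex Hilbert space H. If the range of A is closed in H, then Γ_A + (ker A' × {0}) is a closed subspace of H ⊕ H. (Equivalently, the Cauchy data space C = γ(ker A' × {0}) is a closed subspace of the space of abstract boundary values β.) -/
import Mathlib


noncomputable section

/-- let `A ⊆ A'` be regular (closed densely defined) operators on a complex
Hilbert space `H`. If the range of `A` is closed, then `Γ_A + (ker A' × {0})` is a closed
subspace of `H × H` (equivalently, the Cauchy data space is closed in the space of
abstract boundary values). Here `ker A' × {0} = Γ_{A'} ∩ (H × {0})`. -/
theorem statement_3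
    {H : Type*} [NormedAddCommGroup H] [InnerProductSpace ℂ H] [CompleteSpace H]
    (A A' : H →ₗ.[ℂ] H)
    (hAgraph : IsClosed ((A.graph : Submodule ℂ (H × H)) : Set (H × H)))
    (hAdense : Dense ((A.domain : Submodule ℂ H) : Set H))
    (hA'graph : IsClosed ((A'.graph : Submodule ℂ (H × H)) : Set (H × H)))
    (hA'dense : Dense ((A'.domain : Submodule ℂ H) : Set H))
    (hle : A ≤ A')
    (hranA : IsClosed ((LinearMap.range A.toFun : Submodule ℂ H) : Set H)) :
    IsClosed
      ((A.graph ⊔ (A'.graph ⊓ (⊤ : Submodule ℂ H).prod (⊥ : Submodule ℂ H)) :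
        Submodule ℂ (H × H)) : Set (H × H)) := by
  set S : Submodule ℂ (H × H) :=
    A.graph ⊔ (A'.graph ⊓ (⊤ : Submodule ℂ H).prod (⊥ : Submodule ℂ H)) with hS
  have hgle : A.graph ≤ A'.graph := LinearPMap.le_graph_of_le hle
  -- S ⊆ Γ_{A'}
  have hSle : S ≤ A'.graph := sup_le hgle inf_le_left
  -- second coordinates of S lie in ran A
  have hsnd : (S : Set (H × H)) ⊆ Prod.snd ⁻¹' ((LinearMap.range A.toFun : Submodule ℂ H) : Set H) := by
    intro q hq
    rcases Submodule.mem_sup.mp hq with ⟨a, ha, b, hb, rfl⟩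
    rcases (A.mem_graph_iff).mp ha with ⟨y, hy1, hy2⟩
    have hb2 : b.2 = 0 := by
      have := hb.2
      simpa [Submodule.mem_prod] using (Submodule.mem_bot ℂ).mp this.2
    have : (a + b).2 = A.toFun y := by simp [hb2, ← hy2]
    simp only [Set.mem_preimage, SetLike.mem_coe, this]
    exact ⟨y, rfl⟩
  apply isClosed_of_closure_subset
  intro p hp
  -- p.2 ∈ ran A
  have hclosedpre : IsClosed (Prod.snd ⁻¹' ((LinearMap.range A.toFun : Submodule ℂ H) : Set H)) :=
    hranA.preimage (continuous_snd : Continuous (Prod.snd : H × H → H))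
  have hp2 : p.2 ∈ LinearMap.range A.toFun := by
    have := closure_minimal hsnd hclosedpre hp
    simpa using this
  rcases hp2 with ⟨x, hx⟩
  -- p ∈ Γ_{A'}
  have hpA' : p ∈ A'.graph := by
    have : closure (S : Set (H × H)) ⊆ (A'.graph : Set (H × H)) :=
      closure_minimal hSle hA'graph
    exact this hp
  -- (x, A x) ∈ Γ_A
  have hxg : ((x : H), A.toFun x) ∈ A.graph := A.mem_graph x
  -- p - (x, A x) ∈ Γ_{A'} ⊓ (⊤ × ⊥)
  have hdiff : p - ((x : H), A.toFun x) ∈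
      A'.graph ⊓ (⊤ : Submodule ℂ H).prod (⊥ : Submodule ℂ H) := by
    refine ⟨Submodule.sub_mem _ hpA' (hgle hxg), ?_⟩
    refine ⟨Submodule.mem_top, ?_⟩
    simp [hx]
  -- conclude
  have : p = ((x : H), A.toFun x) + (p - ((x : H), A.toFun x)) := by abel
  rw [this]
  exact Submodule.add_mem _ (Submodule.mem_sup_left hxg) (Submodule.mem_sup_right hdiff)
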